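/- (Purity bound: structural requirement for perfect cooling.) Let ρ_S be a density matrix on ℂ^{d_S}, let H_M be a Hermitian d_M×d_M matrix, β ≥ 0, and let U be any unitary on ℂ^{d_S} ⊗ ℂ^{d_M}. Set ρ'_S := Tr_M[U (ρ_S ⊗ τ(β, H_M)) U†] and let ω_max := λ_max(H_M) − λ_min(H_M) be the largest energy gap of H_M. Then the smallest eigenvalue of ρ'_S satisfies λ_min(ρ'_S) ≥ e^{−β ω_max} · λ_min(ρ_S). In particular, if ρ_S has full rank, β < ∞ and ω_max < ∞, then ρ'_S has full rank, so perfect cooling to a pure state requires β → ∞ or ω_max → ∞. -/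

import Mathlib

open scoped Kronecker ComplexOrder
open Matrix

/-- Partial trace over the second (right) tensor factor. -/
noncomputable def ptrR {α β : Type*} [Fintype β] (σ : Matrix (α × β) (α × β) ℂ) :
    Matrix α α ℂ :=
  Matrix.of fun i i' => ∑ k, σ (i, k) (i', k)

/-- Eigenvalues of a matrix (junk value `0` if the matrix is not Hermitian). -/
noncomputable def eigsOf {n : Type*} [Fintype n] [DecidableEq n] (A : Matrix n n ℂ) : n → ℝ :=
  if h : A.IsHermitian then h.eigenvalues else 0

/-- Smallest eigenvalue of a (Hermitian) matrix. -/
noncomputable def minEig {n : Type*} [Fintype n] [DecidableEq n] [Nonempty n]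
    (A : Matrix n n ℂ) : ℝ :=
  ⨅ i, eigsOf A i

/-- Largest eigenvalue of a (Hermitian) matrix. -/
noncomputable def maxEig {n : Type*} [Fintype n] [DecidableEq n] [Nonempty n]
    (A : Matrix n n ℂ) : ℝ :=
  ⨆ i, eigsOf A i

/-- The partition function `Z(β,H) = Tr[e^{-βH}]` (real part; it is real for Hermitian `H`). -/
noncomputable def partitionZ {n : Type*} [Fintype n] [DecidableEq n]
    (β : ℝ) (H : Matrix n n ℂ) : ℝ :=
  (Matrix.trace (NormedSpace.exp ((-β : ℂ) • H))).re

/-- The Gibbs state `τ(β,H) = e^{-βH} / Z(β,H)`. -/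
noncomputable def gibbs {n : Type*} [Fintype n] [DecidableEq n]
    (β : ℝ) (H : Matrix n n ℂ) : Matrix n n ℂ :=
  (partitionZ β H : ℂ)⁻¹ • NormedSpace.exp ((-β : ℂ) • H)

namespace PurityAux

set_option linter.unusedSectionVars false

section Eig

variable {n : Type*} [Fintype n] [DecidableEq n]

lemma eigsOf_eq {A : Matrix n n ℂ} (hA : A.IsHermitian) : eigsOf A = hA.eigenvalues := dif_pos hA

lemma minEig_le [Nonempty n] {A : Matrix n n ℂ} (hA : A.IsHermitian) (i : n) :
    minEig A ≤ hA.eigenvalues i := by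
  rw [← congrFun (eigsOf_eq hA) i]
  exact ciInf_le (Set.Finite.bddBelow (Set.finite_range _)) i

lemma le_maxEig [Nonempty n] {A : Matrix n n ℂ} (hA : A.IsHermitian) (i : n) :
    hA.eigenvalues i ≤ maxEig A := by
  rw [← congrFun (eigsOf_eq hA) i]
  exact le_ciSup (Set.Finite.bddAbove (Set.finite_range _)) i

lemma le_minEig [Nonempty n] {A : Matrix n n ℂ} (hA : A.IsHermitian) {c : ℝ}
    (h : ∀ i, c ≤ hA.eigenvalues i) : c ≤ minEig A := by
  simp only [minEig, eigsOf_eq hA]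
  exact le_ciInf h

lemma minEig_eq_eig [Nonempty n] {A : Matrix n n ℂ} (hA : A.IsHermitian) :
    ∃ i, minEig A = hA.eigenvalues i := by
  obtain ⟨i, hi⟩ := Finite.exists_min (eigsOf A)
  refine ⟨i, le_antisymm (minEig_le hA i) ?_⟩
  rw [← congrFun (eigsOf_eq hA) i]
  exact le_ciInf hi

lemma sub_smul_one_posSemidef {A : Matrix n n ℂ} (hA : A.IsHermitian) {c : ℝ}
    (h : ∀ i, c ≤ hA.eigenvalues i) : (A - (c : ℂ) • 1).PosSemidef := by
  have key : A - (c : ℂ) • 1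
      = (hA.eigenvectorUnitary : Matrix n n ℂ)
        * diagonal (fun i => ((hA.eigenvalues i - c : ℝ) : ℂ))
        * (hA.eigenvectorUnitary : Matrix n n ℂ)ᴴ := by
    rw [← Matrix.star_eq_conjTranspose]
    conv_lhs => rw [hA.spectral_theorem, Unitary.conjStarAlgAut_apply]
    have h1 : (c : ℂ) • (1 : Matrix n n ℂ)
        = (hA.eigenvectorUnitary : Matrix n n ℂ) * ((c : ℂ) • 1)
          * (star hA.eigenvectorUnitary : Matrix n n ℂ) := by
      rw [Matrix.mul_smul, mul_one, Matrix.smul_mul,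
        Matrix.mem_unitaryGroup_iff.mp hA.eigenvectorUnitary.2]
    rw [h1, ← Matrix.sub_mul, ← Matrix.mul_sub, Matrix.smul_one_eq_diagonal,
      Matrix.diagonal_sub]
    have h2 : (fun i => (RCLike.ofReal ∘ hA.eigenvalues) i - (fun _ => (c : ℂ)) i)
        = fun i => ((hA.eigenvalues i - c : ℝ) : ℂ) := by
      funext i
      simp [Function.comp]
    rw [h2]
  rw [key]
  exact (Matrix.posSemidef_diagonal_iff.mpr fun i =>
    Complex.zero_le_real.mpr (sub_nonneg.mpr (h i))).mul_mul_conjTranspose_same _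

lemma eig_ge_of_sub_posSemidef {A : Matrix n n ℂ} (hA : A.IsHermitian) {c : ℝ}
    (h : (A - (c : ℂ) • 1).PosSemidef) (i : n) : c ≤ hA.eigenvalues i := by
  have h0 := h.re_dotProduct_nonneg ⇑(hA.eigenvectorBasis i)
  have hvv : dotProduct (star ⇑(hA.eigenvectorBasis i)) ⇑(hA.eigenvectorBasis i) = 1 := by
    rw [dotProduct_comm, ← EuclideanSpace.inner_eq_star_dotProduct, inner_self_eq_norm_sq_to_K,
      hA.eigenvectorBasis.orthonormal.1 i]
    norm_num
  rw [Matrix.sub_mulVec, dotProduct_sub, map_sub, Matrix.smul_mulVec,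
    Matrix.one_mulVec, dotProduct_smul, smul_eq_mul, hvv, mul_one,
    ← hA.eigenvalues_eq i] at h0
  simpa using sub_nonneg.mp (by simpa using h0)

lemma le_minEig_of_sub_posSemidef [Nonempty n] {A : Matrix n n ℂ} (hA : A.IsHermitian) {c : ℝ}
    (h : (A - (c : ℂ) • 1).PosSemidef) : c ≤ minEig A :=
  le_minEig hA (eig_ge_of_sub_posSemidef hA h)

end Eig

section Ptr

variable {α β : Type*} [Fintype α] [Fintype β] [DecidableEq α] [DecidableEq β]

/-- The isometry embedding used to express `ptrR` as a sum of conjugations. -/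
def emb (k : β) : Matrix α (α × β) ℂ :=
  Matrix.of fun i p => if p = (i, k) then 1 else 0

lemma ptrR_eq_sum (σ : Matrix (α × β) (α × β) ℂ) :
    ptrR σ = ∑ k, (emb k : Matrix α (α × β) ℂ) * σ * (emb k : Matrix α (α × β) ℂ)ᴴ := by
  ext i i'
  simp only [ptrR, Matrix.of_apply, Matrix.sum_apply, Matrix.mul_apply,
    Matrix.conjTranspose_apply, emb, Matrix.of_apply]
  refine Finset.sum_congr rfl fun k _ => ?_
  rw [Finset.sum_eq_single (i', k) (by intro b _ hb; simp [hb]) (by simp)]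
  rw [Finset.sum_eq_single (i, k) (by intro b _ hb; simp [hb]) (by simp)]
  simp

lemma ptrR_posSemidef {σ : Matrix (α × β) (α × β) ℂ} (hσ : σ.PosSemidef) :
    (ptrR σ).PosSemidef := by
  rw [ptrR_eq_sum]
  refine Finset.sum_induction _ _ (fun a b ha hb => ha.add hb) Matrix.PosSemidef.zero ?_
  exact fun k _ => hσ.mul_mul_conjTranspose_same _

lemma ptrR_sub (X Y : Matrix (α × β) (α × β) ℂ) : ptrR (X - Y) = ptrR X - ptrR Y := by
  ext i i'
  simp [ptrR, Finset.sum_sub_distrib]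

lemma ptrR_smul_one (c : ℂ) :
    ptrR (c • (1 : Matrix (α × β) (α × β) ℂ)) = (c * (Fintype.card β : ℂ)) • 1 := by
  ext i i'
  simp only [ptrR, Matrix.of_apply, Matrix.smul_apply, Matrix.one_apply, smul_eq_mul]
  by_cases h : i = i'
  · subst h; simp [Finset.sum_ite_eq, mul_comm]
  · simp [h, Prod.ext_iff]

end Ptr

section Kron

lemma kron_conjTranspose {l m p q : Type*} (A : Matrix l m ℂ) (B : Matrix p q ℂ) :
    (A ⊗ₖ B)ᴴ = Aᴴ ⊗ₖ Bᴴ := by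
  ext ⟨i, j⟩ ⟨k, l⟩
  simp [Matrix.conjTranspose_apply, Matrix.kroneckerMap_apply, star_mul']

lemma posSemidef_kronecker {m p : Type*} [Fintype m] [Fintype p]
    {A : Matrix m m ℂ} {B : Matrix p p ℂ} (hA : A.PosSemidef) (hB : B.PosSemidef) :
    (A ⊗ₖ B).PosSemidef := by
  classical
  exact hA.kronecker hB

end Kron

section Exp

variable {n : Type*} [Fintype n] [DecidableEq n]

lemma exp_spectral {H : Matrix n n ℂ} (hH : H.IsHermitian) (β : ℝ) :
    NormedSpace.exp ((-β : ℂ) • H)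
      = (hH.eigenvectorUnitary : Matrix n n ℂ)
        * diagonal (fun i => ((Real.exp (-β * hH.eigenvalues i) : ℝ) : ℂ))
        * (star hH.eigenvectorUnitary : Matrix n n ℂ) := by
  set V : Matrix n n ℂ := (hH.eigenvectorUnitary : Matrix n n ℂ) with hV
  have hVV : V * star V = 1 := Matrix.mem_unitaryGroup_iff.mp hH.eigenvectorUnitary.2
  have hVinv : V⁻¹ = star V := Matrix.inv_eq_right_inv hVV
  have hVV' : star V * V = 1 := Matrix.mem_unitaryGroup_iff'.mp hH.eigenvectorUnitary.2
  have hUnit : IsUnit V := ⟨⟨V, star V, hVV, hVV'⟩, rfl⟩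
  have h1 : (-β : ℂ) • H = V * diagonal (fun i => (-β : ℂ) * (hH.eigenvalues i : ℂ)) * V⁻¹ := by
    rw [hVinv]
    conv_lhs => rw [hH.spectral_theorem, Unitary.conjStarAlgAut_apply]
    have h2 : (fun i => (-β : ℂ) * (hH.eigenvalues i : ℂ))
        = (-β : ℂ) • (RCLike.ofReal ∘ hH.eigenvalues : n → ℂ) := by
      funext i; simp [Function.comp]
    rw [h2, Matrix.diagonal_smul, Matrix.mul_smul, Matrix.smul_mul]
  rw [h1, Matrix.exp_conj _ _ hUnit, Matrix.exp_diagonal, hVinv]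
  have h3 : NormedSpace.exp (fun i => (-β : ℂ) * (hH.eigenvalues i : ℂ))
      = fun i => ((Real.exp (-β * hH.eigenvalues i) : ℝ) : ℂ) := by
    funext i
    rw [Pi.coe_exp, ← Complex.exp_eq_exp_ℂ, Complex.ofReal_exp]
    norm_num
  rw [h3]

lemma partitionZ_eq {H : Matrix n n ℂ} (hH : H.IsHermitian) (β : ℝ) :
    partitionZ β H = ∑ i, Real.exp (-β * hH.eigenvalues i) := by
  have hVV : (star hH.eigenvectorUnitary : Matrix n n ℂ)
      * (hH.eigenvectorUnitary : Matrix n n ℂ) = 1 :=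
    Matrix.mem_unitaryGroup_iff'.mp hH.eigenvectorUnitary.2
  rw [partitionZ, exp_spectral hH β, Matrix.trace_mul_comm, ← mul_assoc, hVV, one_mul,
    Matrix.trace_diagonal]
  rw [← Complex.ofReal_sum]
  exact Complex.ofReal_re _

lemma partitionZ_pos [Nonempty n] {H : Matrix n n ℂ} (hH : H.IsHermitian) (β : ℝ) :
    0 < partitionZ β H := by
  rw [partitionZ_eq hH β]
  exact Finset.sum_pos (fun i _ => Real.exp_pos _) Finset.univ_nonempty

lemma partitionZ_le [Nonempty n] {H : Matrix n n ℂ} (hH : H.IsHermitian) {β : ℝ} (hβ : 0 ≤ β) :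
    partitionZ β H ≤ (Fintype.card n : ℝ) * Real.exp (-β * minEig H) := by
  rw [partitionZ_eq hH β]
  calc ∑ i, Real.exp (-β * hH.eigenvalues i)
      ≤ ∑ _i : n, Real.exp (-β * minEig H) := by
        refine Finset.sum_le_sum fun i _ => Real.exp_le_exp.mpr ?_
        have h1 : minEig H ≤ hH.eigenvalues i := minEig_le hH i
        nlinarith
    _ = (Fintype.card n : ℝ) * Real.exp (-β * minEig H) := by
        rw [Finset.sum_const, Finset.card_univ, nsmul_eq_mul]

/-- Unitary conjugation of a real diagonal with entrywise lower bound `c`. -/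
lemma conj_diag_sub_posSemidef {V : Matrix n n ℂ} (hV : V ∈ Matrix.unitaryGroup n ℂ)
    {f : n → ℝ} {c : ℝ} (h : ∀ i, c ≤ f i) :
    (V * diagonal (fun i => (f i : ℂ)) * star V - (c : ℂ) • 1).PosSemidef := by
  have hVV : V * star V = 1 := Matrix.mem_unitaryGroup_iff.mp hV
  have h1 : (c : ℂ) • (1 : Matrix n n ℂ) = V * ((c : ℂ) • 1) * star V := by
    rw [Matrix.mul_smul, mul_one, Matrix.smul_mul, hVV]
  rw [h1, ← Matrix.sub_mul, ← Matrix.mul_sub, Matrix.smul_one_eq_diagonal, Matrix.diagonal_sub]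
  have h2 : (fun i => (f i : ℂ) - (fun _ => (c : ℂ)) i) = fun i => ((f i - c : ℝ) : ℂ) := by
    funext i; push_cast; ring
  rw [h2, Matrix.star_eq_conjTranspose V]
  exact (Matrix.posSemidef_diagonal_iff.mpr fun i =>
    Complex.zero_le_real.mpr (sub_nonneg.mpr (h i))).mul_mul_conjTranspose_same _

lemma gibbs_eq {H : Matrix n n ℂ} (hH : H.IsHermitian) (β : ℝ) :
    gibbs β H = (hH.eigenvectorUnitary : Matrix n n ℂ)
        * diagonal (fun i => ((Real.exp (-β * hH.eigenvalues i) / partitionZ β H : ℝ) : ℂ))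
        * (star hH.eigenvectorUnitary : Matrix n n ℂ) := by
  rw [gibbs, exp_spectral hH β, ← Matrix.smul_mul, ← Matrix.mul_smul]
  have h2 : ((partitionZ β H : ℂ))⁻¹ • (fun i => ((Real.exp (-β * hH.eigenvalues i) : ℝ) : ℂ))
      = fun i => ((Real.exp (-β * hH.eigenvalues i) / partitionZ β H : ℝ) : ℂ) := by
    funext i
    simp only [Pi.smul_apply, smul_eq_mul]
    push_cast
    rw [div_eq_inv_mul]
  rw [← Matrix.diagonal_smul, h2]

lemma gibbs_sub_posSemidef [Nonempty n] {H : Matrix n n ℂ} (hH : H.IsHermitian)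
    {β : ℝ} (hβ : 0 ≤ β) :
    (gibbs β H
      - ((Real.exp (-β * maxEig H) / partitionZ β H : ℝ) : ℂ) • 1).PosSemidef := by
  rw [gibbs_eq hH β]
  refine conj_diag_sub_posSemidef hH.eigenvectorUnitary.2 fun i => ?_
  have h1 : hH.eigenvalues i ≤ maxEig H := le_maxEig hH i
  have h2 : Real.exp (-β * maxEig H) ≤ Real.exp (-β * hH.eigenvalues i) := by
    refine Real.exp_le_exp.mpr ?_
    nlinarith
  have hZ : 0 < partitionZ β H := partitionZ_pos hH β
  exact div_le_div_of_nonneg_right h2 hZ.le |>.trans_eq rfl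

end Exp

end PurityAux

open PurityAux in
/-- Purity bound: structural requirement for perfect cooling:
`λ_min(ρ'_S) ≥ e^{−β ω_max} λ_min(ρ_S)`; in particular a full-rank target remains full rank
after any unitary interaction with a thermal machine of bounded spectrum at finite `β`. -/
theorem purity_bound (dS dM : ℕ) [NeZero dS] [NeZero dM]
    (ρS : Matrix (Fin dS) (Fin dS) ℂ) (hρS : ρS.PosSemidef) (hρStr : ρS.trace = 1)
    (HM : Matrix (Fin dM) (Fin dM) ℂ) (hHM : HM.IsHermitian)
    (β : ℝ) (hβ : 0 ≤ β)
    (U : Matrix (Fin dS × Fin dM) (Fin dS × Fin dM) ℂ)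
    (hU : U ∈ Matrix.unitaryGroup (Fin dS × Fin dM) ℂ) :
    Real.exp (-β * (maxEig HM - minEig HM)) * minEig ρS
      ≤ minEig (ptrR (U * (ρS ⊗ₖ gibbs β HM) * Uᴴ)) ∧
    (ρS.rank = dS → (ptrR (U * (ρS ⊗ₖ gibbs β HM) * Uᴴ)).rank = dS) := by
  haveI : Nonempty (Fin dS) := ⟨⟨0, Nat.pos_of_ne_zero (NeZero.ne dS)⟩⟩
  haveI : Nonempty (Fin dM) := ⟨⟨0, Nat.pos_of_ne_zero (NeZero.ne dM)⟩⟩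
  set a : ℝ := minEig ρS with ha_def
  set Z : ℝ := partitionZ β HM with hZ_def
  set b : ℝ := Real.exp (-β * maxEig HM) / Z with hb_def
  set τ : Matrix (Fin dM) (Fin dM) ℂ := gibbs β HM with hτ_def
  have hZ : 0 < Z := partitionZ_pos hHM β
  have ha0 : 0 ≤ a := le_minEig hρS.1 fun i => hρS.eigenvalues_nonneg i
  have hb0 : 0 ≤ b := div_nonneg (Real.exp_pos _).le hZ.le
  have hρsub : (ρS - (a : ℂ) • 1).PosSemidef := sub_smul_one_posSemidef hρS.1 (minEig_le hρS.1)
  have hτsub : (τ - (b : ℂ) • 1).PosSemidef := gibbs_sub_posSemidef hHM hβ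
  have hsmul : ∀ c : ℝ, 0 ≤ c →
      ((c : ℂ) • (1 : Matrix (Fin dS) (Fin dS) ℂ)).PosSemidef := by
    intro c hc
    rw [Matrix.smul_one_eq_diagonal]
    exact Matrix.posSemidef_diagonal_iff.mpr fun i => Complex.zero_le_real.mpr hc
  have hsmulM : ∀ c : ℝ, 0 ≤ c →
      ((c : ℂ) • (1 : Matrix (Fin dM) (Fin dM) ℂ)).PosSemidef := by
    intro c hc
    rw [Matrix.smul_one_eq_diagonal]
    exact Matrix.posSemidef_diagonal_iff.mpr fun i => Complex.zero_le_real.mpr hc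
  have hτpsd : τ.PosSemidef := by
    have := hτsub.add (hsmulM b hb0)
    simpa using this
  -- the kronecker decomposition
  have key : ρS ⊗ₖ τ - ((a * b : ℝ) : ℂ) • 1
      = (ρS - (a : ℂ) • 1) ⊗ₖ τ + ((a : ℂ) • 1) ⊗ₖ (τ - (b : ℂ) • 1) := by
    ext ⟨i, j⟩ ⟨i', j'⟩
    simp only [Matrix.sub_apply, Matrix.add_apply, Matrix.smul_apply, Matrix.kroneckerMap_apply,
      Matrix.one_apply, smul_eq_mul, Prod.mk.injEq]
    by_cases hii : i = i' <;> by_cases hjj : j = j' <;>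
      simp [hii, hjj] <;> push_cast <;> ring
  have hσsub : (ρS ⊗ₖ τ - ((a * b : ℝ) : ℂ) • 1).PosSemidef := by
    rw [key]
    exact (posSemidef_kronecker hρsub hτpsd).add
      (posSemidef_kronecker (hsmul a ha0) hτsub)
  have hUU : U * Uᴴ = 1 := by
    rw [← Matrix.star_eq_conjTranspose]
    exact Matrix.mem_unitaryGroup_iff.mp hU
  have hconj : (U * (ρS ⊗ₖ τ) * Uᴴ - ((a * b : ℝ) : ℂ) • 1).PosSemidef := by
    have h1 : U * (ρS ⊗ₖ τ - ((a * b : ℝ) : ℂ) • 1) * Uᴴ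
        = U * (ρS ⊗ₖ τ) * Uᴴ - ((a * b : ℝ) : ℂ) • 1 := by
      rw [Matrix.mul_sub, Matrix.sub_mul, Matrix.mul_smul, mul_one, Matrix.smul_mul, hUU]
    rw [← h1]
    exact hσsub.mul_mul_conjTranspose_same U
  have hptr : (ptrR (U * (ρS ⊗ₖ τ) * Uᴴ) - ((a * b * dM : ℝ) : ℂ) • 1).PosSemidef := by
    have h2 := ptrR_posSemidef hconj
    rw [ptrR_sub, ptrR_smul_one] at h2
    have h3 : (((a * b : ℝ) : ℂ) * (Fintype.card (Fin dM) : ℂ)) = ((a * b * dM : ℝ) : ℂ) := by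
      rw [Fintype.card_fin]
      push_cast
      ring
    rwa [h3] at h2
  have hρ'psd : (ptrR (U * (ρS ⊗ₖ τ) * Uᴴ)).PosSemidef := by
    have habd : (0 : ℝ) ≤ a * b * dM := by positivity
    have := hptr.add (hsmul (a * b * dM) habd)
    simpa using this
  have hmin : a * b * dM ≤ minEig (ptrR (U * (ρS ⊗ₖ τ) * Uᴴ)) :=
    le_minEig_of_sub_posSemidef hρ'psd.1 hptr
  have hdM : (0 : ℝ) < dM := by
    exact_mod_cast Nat.pos_of_ne_zero (NeZero.ne dM)
  -- the scalar bound : exp (-β ω) ≤ b * dM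
  have hbd : Real.exp (-β * (maxEig HM - minEig HM)) ≤ b * dM := by
    have hZle : Z ≤ (dM : ℝ) * Real.exp (-β * minEig HM) := by
      have := partitionZ_le hHM hβ (H := HM)
      simpa [Fintype.card_fin] using this
    have heq : Real.exp (-β * (maxEig HM - minEig HM))
        = Real.exp (-β * maxEig HM) * dM / ((dM : ℝ) * Real.exp (-β * minEig HM)) := by
      rw [show -β * (maxEig HM - minEig HM) = (-β * maxEig HM) - (-β * minEig HM) by ring,
        Real.exp_sub]
      rw [mul_comm (Real.exp (-β * maxEig HM)) (dM : ℝ), mul_div_mul_left _ _ hdM.ne']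
    rw [heq, hb_def, div_mul_eq_mul_div]
    apply div_le_div_of_nonneg_left _ hZ hZle
    positivity
  constructor
  · calc Real.exp (-β * (maxEig HM - minEig HM)) * a
        ≤ (b * dM) * a := mul_le_mul_of_nonneg_right hbd ha0
      _ = a * b * dM := by ring
      _ ≤ minEig (ptrR (U * (ρS ⊗ₖ τ) * Uᴴ)) := hmin
  · intro hrank
    have hcard : Fintype.card {i // hρS.1.eigenvalues i ≠ 0} = dS := by
      rw [← hρS.1.rank_eq_card_non_zero_eigs, hrank]
    have hall : ∀ i, hρS.1.eigenvalues i ≠ 0 := by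
      intro i
      by_contra h0
      have hlt := Fintype.card_subtype_lt (p := fun j => hρS.1.eigenvalues j ≠ 0)
        (x := i) (by simpa using h0)
      rw [hcard, Fintype.card_fin] at hlt
      exact lt_irrefl _ hlt
    have hapos : 0 < a := by
      obtain ⟨i0, hi0⟩ := minEig_eq_eig hρS.1
      rw [ha_def, hi0]
      exact (hρS.eigenvalues_nonneg i0).lt_of_ne (Ne.symm (hall i0))
    have hbpos : 0 < b := div_pos (Real.exp_pos _) hZ
    have hcpos : (0 : ℝ) < a * b * dM := by positivity
    have h1 : (((a * b * dM : ℝ) : ℂ) • (1 : Matrix (Fin dS) (Fin dS) ℂ)).PosDef := by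
      rw [Matrix.smul_one_eq_diagonal]
      exact Matrix.posDef_diagonal_iff.mpr fun i => Complex.zero_lt_real.mpr hcpos
    have hpd : (ptrR (U * (ρS ⊗ₖ τ) * Uᴴ)).PosDef := by
      have := Matrix.PosDef.posSemidef_add hptr h1
      simpa using this
    rw [Matrix.rank_of_isUnit _ hpd.isUnit, Fintype.card_fin]
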